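/- If all μᵢ ≥ 0 and σ̄ > 0 then ξ ≤ (n/2)·log n + n·log(1 + μ̄/σ̄), i.e., the extreme minimum of the total KL divergence grows at most logarithmically in n for bounded mean-to-deviation ratio. -/

import Mathlib

open Real Finset

/-- if all μᵢ ≥ 0 and σ̄ > 0 then
ξ = (n/2)·log(1 + (1/(nσ̄²))Σᵢ(μᵢ-μ̄)²) ≤ (n/2)·log n + n·log(1 + μ̄/σ̄). -/
theorem xi_log_growth (n : ℕ) (hn : 1 ≤ n) (μ : Fin n → ℝ) (hμ : ∀ i, 0 ≤ μ i)
    (σbar : ℝ) (hσ : 0 < σbar) :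
    let μbar : ℝ := (1 / n) * ∑ i, μ i
    let ξ : ℝ := ((n : ℝ) / 2) * Real.log (1 + (1 / (n * σbar^2)) * ∑ i, (μ i - μbar)^2)
    ξ ≤ ((n : ℝ) / 2) * Real.log n + (n : ℝ) * Real.log (1 + μbar / σbar) := by
  intro μbar ξ
  have hnR : (1 : ℝ) ≤ (n : ℝ) := by exact_mod_cast hn
  have hn0 : (0 : ℝ) < (n : ℝ) := by linarith
  set S : ℝ := ∑ i, μ i with hSdef
  have hS0 : 0 ≤ S := Finset.sum_nonneg fun i _ => hμ i
  have hμbar : 0 ≤ μbar := by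
    have : (0:ℝ) ≤ (1 / n) * S := by positivity
    simpa [μbar] using this
  have hsum : S = n * μbar := by
    simp only [μbar]
    field_simp
    exact hSdef
  -- ∑ μ i ^2 ≤ S^2
  have hsq : ∑ i, (μ i)^2 ≤ S^2 := by
    have h1 : ∑ i, (μ i)^2 ≤ ∑ i, μ i * S := by
      apply Finset.sum_le_sum
      intro i _
      have hle : μ i ≤ S := Finset.single_le_sum (fun j _ => hμ j) (Finset.mem_univ i)
      have := mul_le_mul_of_nonneg_left hle (hμ i)
      nlinarith [hμ i]
    have h2 : ∑ i, μ i * S = S^2 := by rw [← Finset.sum_mul]; ring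
    linarith
  have hexp : ∑ i, (μ i - μbar)^2 = (∑ i, (μ i)^2) - 2 * μbar * S + n * μbar^2 := by
    have : ∀ i, (μ i - μbar)^2 = (μ i)^2 - 2 * μbar * μ i + μbar^2 := fun i => by ring
    simp only [this, Finset.sum_add_distrib, Finset.sum_sub_distrib, ← Finset.mul_sum,
      Finset.sum_const, Finset.card_univ, Fintype.card_fin, nsmul_eq_mul]
    rw [hSdef]
  have hkey : ∑ i, (μ i - μbar)^2 ≤ n^2 * μbar^2 := by
    rw [hexp]
    nlinarith [sq_nonneg μbar]
  set x : ℝ := μbar / σbar with hx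
  have hx0 : 0 ≤ x := div_nonneg hμbar hσ.le
  have hA : 1 + (1 / (n * σbar^2)) * ∑ i, (μ i - μbar)^2 ≤ (n : ℝ) * (1 + x)^2 := by
    have hAle : (1 / (n * σbar^2)) * ∑ i, (μ i - μbar)^2 ≤ (n : ℝ) * x^2 := by
      have h : (1 / ((n:ℝ) * σbar^2)) * ∑ i, (μ i - μbar)^2
          ≤ (1 / ((n:ℝ) * σbar^2)) * ((n:ℝ)^2 * μbar^2) :=
        mul_le_mul_of_nonneg_left hkey (by positivity)
      have heq : (1 / ((n:ℝ) * σbar^2)) * ((n:ℝ)^2 * μbar^2) = (n : ℝ) * x^2 := by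
        rw [hx, div_pow]; field_simp
      linarith
    nlinarith [sq_nonneg x, hx0]
  have hApos : (0:ℝ) < 1 + (1 / (n * σbar^2)) * ∑ i, (μ i - μbar)^2 := by
    have : (0:ℝ) ≤ (1 / (n * σbar^2)) * ∑ i, (μ i - μbar)^2 := by
      apply mul_nonneg (by positivity)
      exact Finset.sum_nonneg fun i _ => sq_nonneg _
    linarith
  have hlog : Real.log (1 + (1 / (n * σbar^2)) * ∑ i, (μ i - μbar)^2)
      ≤ Real.log ((n : ℝ) * (1 + x)^2) := Real.log_le_log hApos hA
  have h1x : (0:ℝ) < 1 + x := by linarith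
  have hlogsplit : Real.log ((n : ℝ) * (1 + x)^2) = Real.log n + 2 * Real.log (1 + x) := by
    rw [Real.log_mul (ne_of_gt hn0) (by positivity), Real.log_pow]
    push_cast; ring
  have : ξ ≤ ((n : ℝ) / 2) * (Real.log n + 2 * Real.log (1 + x)) := by
    unfold ξ
    rw [← hlogsplit]
    apply mul_le_mul_of_nonneg_left hlog (by positivity)
  calc ξ ≤ ((n : ℝ) / 2) * (Real.log n + 2 * Real.log (1 + x)) := this
    _ = ((n : ℝ) / 2) * Real.log n + (n : ℝ) * Real.log (1 + μbar / σbar) := by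
        rw [hx]; ring
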